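/- Let p_a, p_b, p_c be non-collinear points in ℝ² and p_d, p_e two further points, with l_{xy} = ‖p_x - p_y‖², q_d = (l_{ab}+l_{ad}-l_{bd}, l_{ac}+l_{ad}-l_{cd})ᵀ, q_e defined analogously, and G₂ the Gram matrix of v_{ab}, v_{ac}. Then 4 l_{de} = (q_d - q_e)ᵀ G₂⁻¹ (q_d - q_e). -/

import Mathlib

open Matrix

/-- With non-collinear `p_a, p_b, p_c` and further points `p_d, p_e`:
`4 l_de = (q_d - q_e)ᵀ G₂⁻¹ (q_d - q_e)`. -/
theorem sq_dist_de_quadratic_form (pa pb pc pd pe : EuclideanSpace ℝ (Fin 2))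
    (hnc : LinearIndependent ℝ ![pb - pa, pc - pa]) :
    let l : EuclideanSpace ℝ (Fin 2) → EuclideanSpace ℝ (Fin 2) → ℝ :=
      fun x y => ‖x - y‖ ^ 2
    let G2 : Matrix (Fin 2) (Fin 2) ℝ :=
      !![inner (𝕜 := ℝ) (pb - pa) (pb - pa), inner (𝕜 := ℝ) (pb - pa) (pc - pa);
         inner (𝕜 := ℝ) (pc - pa) (pb - pa), inner (𝕜 := ℝ) (pc - pa) (pc - pa)]
    let qd : Fin 2 → ℝ :=
      ![l pa pb + l pa pd - l pb pd, l pa pc + l pa pd - l pc pd]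
    let qe : Fin 2 → ℝ :=
      ![l pa pb + l pa pe - l pb pe, l pa pc + l pa pe - l pc pe]
    4 * l pd pe = (qd - qe) ⬝ᵥ (G2⁻¹ *ᵥ (qd - qe)) := by
  intro l G2 qd qe
  have hD : (pb 0 - pa 0) * (pc 1 - pa 1) - (pb 1 - pa 1) * (pc 0 - pa 0) ≠ 0 := by
    intro h
    rw [LinearIndependent.pair_iff] at hnc
    have h1 := hnc (pc 1 - pa 1) (-(pb 1 - pa 1)) (by
      ext i; fin_cases i <;>
        simp [PiLp.smul_apply, PiLp.add_apply, PiLp.sub_apply] <;> nlinarith [h])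
    have h2 := hnc (pc 0 - pa 0) (-(pb 0 - pa 0)) (by
      ext i; fin_cases i <;>
        simp [PiLp.smul_apply, PiLp.add_apply, PiLp.sub_apply] <;> nlinarith [h])
    have h3 := hnc 1 0 (by
      ext i; fin_cases i <;>
        simp [PiLp.smul_apply, PiLp.add_apply, PiLp.sub_apply] <;> nlinarith [h1.1, h1.2, h2.1, h2.2])
    exact one_ne_zero h3.1
  have hl : ∀ x y : EuclideanSpace ℝ (Fin 2),
      l x y = (x 0 - y 0)^2 + (x 1 - y 1)^2 := by
    intro x y
    simp only [l, ← real_inner_self_eq_norm_sq, PiLp.inner_apply, RCLike.inner_apply,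
      conj_trivial, Fin.sum_univ_two, PiLp.sub_apply]
    ring
  have hinner : ∀ x y : EuclideanSpace ℝ (Fin 2),
      inner (𝕜 := ℝ) x y = x 0 * y 0 + x 1 * y 1 := by
    intro x y
    simp [PiLp.inner_apply, RCLike.inner_apply, conj_trivial, Fin.sum_univ_two]
    ring
  have hdet : G2.det = ((pb 0 - pa 0) * (pc 1 - pa 1) - (pb 1 - pa 1) * (pc 0 - pa 0))^2 := by
    simp only [G2, Matrix.det_fin_two_of, hinner, PiLp.sub_apply]
    ring
  rw [Matrix.inv_def, hdet]
  simp only [Matrix.adjugate_fin_two, G2, qd, qe, hl, hinner, PiLp.sub_apply,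
    Matrix.smul_mulVec, Matrix.smul_apply, Matrix.mulVec, dotProduct, Fin.sum_univ_two,
    Matrix.of_apply, Matrix.cons_val', Matrix.cons_val_zero, Matrix.cons_val_one,
    Matrix.head_cons, Matrix.head_fin_const, Pi.sub_apply, Pi.smul_apply, smul_eq_mul,
    Ring.inverse_eq_inv']
  field_simp
  ring
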